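/- arXiv:0705.1507 — 5 statements merged into one kernel-verified Lean document; each statement's English description precedes it below -/
import Mathlib

section
/- If a dBV algebra (C, ·, Δ, Q) has the ΔQ-property, i.e., (Ker Q ∩ Ker Δ) ∩ (Im Δ ⊕ Im Q) = Im ΔQ = Im QΔ, then it is semi-classical: every cohomology class of the complex (C, Q) has a representative lying in Ker Δ. -/
/-- A ℤ-graded super-commutative associative unital algebra over `k`,
presented via a family of grading submodules, a bilinear product, and
Koszul-sign commutativity on homogeneous elements. -/
structure GCA (k C : Type) [Field k] [AddCommGroup C] [Module k C] where
  grade : ℤ → Submodule k C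
  mul : C →ₗ[k] C →ₗ[k] C
  one : C
  one_mem : one ∈ grade 0
  one_mul : ∀ a : C, mul one a = a
  mul_one : ∀ a : C, mul a one = a
  mul_assoc : ∀ a b c : C, mul (mul a b) c = mul a (mul b c)
  mul_mem : ∀ {m n : ℤ} {a b : C}, a ∈ grade m → b ∈ grade n → mul a b ∈ grade (m + n)
  supercomm : ∀ {m n : ℤ} {a b : C}, a ∈ grade m → b ∈ grade n →
    mul a b = ((m * n).negOnePow : ℤ) • mul b a

variable {k C : Type} [Field k] [AddCommGroup C] [Module k C]

/-- The BV bracket of a homogeneous element `a` of ghost number `m` with `b`: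
`(-1)^{|a|}(a,b) := Δ(a·b) - (Δa)·b - (-1)^{|a|} a·(Δb)`. -/
def bvBracket (G : GCA k C) (D : C →ₗ[k] C) (m : ℤ) (a b : C) : C :=
  (m.negOnePow : ℤ) •
    (D (G.mul a b) - G.mul (D a) b - (m.negOnePow : ℤ) • G.mul a (D b))

/-- A differential Batalin-Vilkovisky algebra: a graded super-commutative algebra
with square-zero degree-one operators `Q` (a derivation) and `Dd` (the BV operator Δ),
anticommuting with each other, whose bracket obeys the super-Poisson law. -/
structure DBV (k C : Type) [Field k] [AddCommGroup C] [Module k C] extends GCA k C where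
  Q : C →ₗ[k] C
  Dd : C →ₗ[k] C
  Q_mem : ∀ {n : ℤ} {a : C}, a ∈ grade n → Q a ∈ grade (n + 1)
  Dd_mem : ∀ {n : ℤ} {a : C}, a ∈ grade n → Dd a ∈ grade (n + 1)
  Q_sq : ∀ a : C, Q (Q a) = 0
  Dd_sq : ∀ a : C, Dd (Dd a) = 0
  QDd : ∀ a : C, Q (Dd a) + Dd (Q a) = 0
  Q_deriv : ∀ {m : ℤ} {a b : C}, a ∈ grade m →
    Q (mul a b) = mul (Q a) b + (m.negOnePow : ℤ) • mul a (Q b)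
  poisson : ∀ {m n : ℤ} {a b c : C}, a ∈ grade m → b ∈ grade n →
    bvBracket toGCA Dd m a (mul b c)
      = mul (bvBracket toGCA Dd m a b) c
        + (((m + 1) * n).negOnePow : ℤ) • mul b (bvBracket toGCA Dd m a c)

/-- a dBV algebra with the ΔQ-property (any `x` with `Qx = 0` lying
in the image of `Δ` is of the form `x = QΔz = -ΔQz`) is semi-classical: every
`Q`-cohomology class has a representative lying in `Ker Δ`. -/
theorem deltaQ_property_implies_semiclassical [CharZero k] (B : DBV k C)
    (hDQ : ∀ x : C, B.Q x = 0 → (∃ y : C, x = B.Dd y) →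
      ∃ z : C, x = B.Q (B.Dd z) ∧ x = -B.Dd (B.Q z)) :
    ∀ y : C, B.Q y = 0 →
      ∃ y' : C, B.Dd y' = 0 ∧ B.Q y' = 0 ∧ ∃ z : C, y' = y - B.Q z := by
  intro y hy
  have hQDy : B.Q (B.Dd y) = 0 := by
    have h := B.QDd y
    rw [hy, map_zero, add_zero] at h
    exact h
  obtain ⟨z, h1, h2⟩ := hDQ (B.Dd y) hQDy ⟨y, rfl⟩
  refine ⟨y + B.Q z, ?_, ?_, -z, ?_⟩
  · rw [map_add, ← neg_neg (B.Dd (B.Q z)), ← h2, add_neg_cancel]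
  · rw [map_add, B.Q_sq, add_zero, hy]
  · rw [map_neg]; abel
end

section
/- Let (C, Q, ( , )) be a DGLA and suppose O^{[j]} (j ≥ 1) are degree-0 elements with O^{[j+1]} = (1/(j+1)) tᵅ O^{[j]}_α, where the O^{[k]}_α satisfy Q O^{[k]}_α = -Σ_{j=1}^{k} (O^{[j]}, O^{[k-j]}_α) for all 0 ≤ k ≤ n. Then for each 0 ≤ k ≤ n, Q O^{[k+1]} + ½ Σ_{j=1}^{k} (O^{[k-j+1]}, O^{[j]}) = 0. -/
/-- Lemma 18: in a DGLA `(L, Q, ( , ))` over `k`, suppose degree-0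
elements `O⁽ʲ⁾` are built from families `O⁽ʲ⁾_α ∈ (C ⊗ Sʲ(H*))^{|O_α|}` by
contraction with the dual coordinates, `O⁽ʲ⁺¹⁾ = (1/(j+1)) tᵅ O⁽ʲ⁾_α` (here
`t a` is the operator "multiply by tᵅ", `g a = |O_α|`, and the signs
`(-1)^{|α|}` implement moving `tᵅ` past `Q` and past the degree-0 brackets),
and `Q O⁽ᵏ⁾_α = -Σ_{j=1}^{k} (O⁽ʲ⁾, O⁽ᵏ⁻ʲ⁾_α)` holds for all `0 ≤ k ≤ n`.
Then `Q O⁽ᵏ⁺¹⁾ + ½ Σ_{j=1}^{k} (O⁽ᵏ⁻ʲ⁺¹⁾, O⁽ʲ⁾) = 0` for all `0 ≤ k ≤ n`. -/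
theorem maurer_cartan_from_coefficients
    {k L A : Type} [Field k] [CharZero k] [AddCommGroup L] [Module k L] [Fintype A]
    (Qd : L →ₗ[k] L) (br : L →ₗ[k] L →ₗ[k] L)
    (g : A → ℤ) (t : A → L →ₗ[k] L)
    (O : ℕ → L) (Oa : ℕ → A → L) (n : ℕ)
    (hQt : ∀ (a : A) (x : L), ((g a).negOnePow : ℤ) • t a (Qd x) = Qd (t a x))
    (hbrt : ∀ (a : A) (i : ℕ) (y : L),
      ((g a).negOnePow : ℤ) • t a (br (O i) y) = br (O i) (t a y))
    (hsymm : ∀ i j : ℕ, br (O i) (O j) = br (O j) (O i))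
    (hcontr : ∀ k' : ℕ, k' ≤ n → (k' + 1) • O (k' + 1) = ∑ a : A, t a (Oa k' a))
    (hmc : ∀ k' : ℕ, k' ≤ n → ∀ a : A,
      Qd (Oa k' a) = -∑ j ∈ Finset.Icc 1 k', br (O j) (Oa (k' - j) a)) :
    ∀ k' : ℕ, k' ≤ n →
      Qd (O (k' + 1))
        + (2 : k)⁻¹ • ∑ j ∈ Finset.Icc 1 k', br (O (k' - j + 1)) (O j) = 0 := by
  intro k' hk'
  set X : ℕ → L := fun j => br (O (k' - j + 1)) (O j) with hX
  set S : L := ∑ j ∈ Finset.Icc 1 k', X j with hS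
  -- step 1: Qd on each summand
  have h2 : ∀ a : A, Qd (t a (Oa k' a))
      = -∑ j ∈ Finset.Icc 1 k', br (O j) (t a (Oa (k' - j) a)) := by
    intro a
    rw [← hQt a, hmc k' hk' a, map_neg, map_sum, smul_neg, Finset.smul_sum, neg_inj]
    exact Finset.sum_congr rfl fun j _ => hbrt a j _
  have key : (k' + 1) • Qd (O (k' + 1))
      = -∑ j ∈ Finset.Icc 1 k', (k' - j + 1) • X j := by
    rw [← map_nsmul, hcontr k' hk', map_sum]
    calc ∑ a : A, Qd (t a (Oa k' a))
        = ∑ a : A, -∑ j ∈ Finset.Icc 1 k', br (O j) (t a (Oa (k' - j) a)) :=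
          Finset.sum_congr rfl fun a _ => h2 a
      _ = -∑ a : A, ∑ j ∈ Finset.Icc 1 k', br (O j) (t a (Oa (k' - j) a)) := by
          rw [Finset.sum_neg_distrib]
      _ = -∑ j ∈ Finset.Icc 1 k', ∑ a : A, br (O j) (t a (Oa (k' - j) a)) := by
          rw [Finset.sum_comm]
      _ = -∑ j ∈ Finset.Icc 1 k', (k' - j + 1) • X j := by
          rw [neg_inj]
          refine Finset.sum_congr rfl fun j hj => ?_
          have hjk : j ≤ k' := (Finset.mem_Icc.mp hj).2
          have := hcontr (k' - j) (le_trans (Nat.sub_le _ _) hk')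
          rw [← map_sum, ← this, map_nsmul, hsymm]
  -- step 2: reindexing
  have hre : ∑ j ∈ Finset.Icc 1 k', (k' - j + 1) • X j
      = ∑ j ∈ Finset.Icc 1 k', j • X j := by
    refine Finset.sum_nbij' (fun j => k' + 1 - j) (fun j => k' + 1 - j) ?_ ?_ ?_ ?_ ?_
    · intro j hj; simp only [Finset.mem_Icc] at *; omega
    · intro j hj; simp only [Finset.mem_Icc] at *; omega
    · intro j hj; simp only [Finset.mem_Icc] at hj
      show k' + 1 - (k' + 1 - j) = j; omega
    · intro j hj; simp only [Finset.mem_Icc] at hj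
      show k' + 1 - (k' + 1 - j) = j; omega
    · intro j hj
      simp only [Finset.mem_Icc] at hj
      have e1 : k' + 1 - j = k' - j + 1 := by omega
      have e2 : k' - (k' - j + 1) + 1 = j := by omega
      show (k' - j + 1) • X j = (k' + 1 - j) • X (k' + 1 - j)
      rw [e1]
      congr 1
      simp only [hX]
      rw [e2, hsymm]
  have htwo : (k' + 1) • S = 2 • ∑ j ∈ Finset.Icc 1 k', (k' - j + 1) • X j := by
    rw [two_nsmul, Finset.smul_sum]
    nth_rewrite 2 [hre]
    rw [← Finset.sum_add_distrib]
    refine Finset.sum_congr rfl fun j hj => ?_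
    have hjk : j ≤ k' := (Finset.mem_Icc.mp hj).2
    rw [← add_nsmul]
    congr 1
    omega
  -- conclude
  set c : k := ((k' + 1 : ℕ) : k) with hc
  set T : L := ∑ j ∈ Finset.Icc 1 k', (k' - j + 1) • X j with hT
  have keyc : c • Qd (O (k' + 1)) = -T := by
    rw [hc, Nat.cast_smul_eq_nsmul, key]
  have csS : c • S = (2 : k) • T := by
    rw [hc, Nat.cast_smul_eq_nsmul, htwo, ← Nat.cast_smul_eq_nsmul k 2 T, Nat.cast_ofNat]
  have hc2 : (2 : k) * c ≠ 0 := by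
    exact mul_ne_zero two_ne_zero (Nat.cast_ne_zero.mpr (Nat.succ_ne_zero k'))
  have main : ((2 : k) * c) • (Qd (O (k' + 1)) + (2 : k)⁻¹ • S) = 0 := by
    have h24 : (2 : k) * c * (2 : k)⁻¹ = c := by
      field_simp
    rw [smul_add, smul_smul, h24, csS, mul_smul, keyc, smul_neg]
    exact neg_add_cancel _
  rcases (smul_eq_zero.mp main) with h | h
  · exact absurd h hc2
  · exact h
end

section
/- Given a special versal solution O with structure constants A_{αβ}^γ satisfying O_α·O_β = A_{αβ}^γ O_γ + 𝒬L_{αβ}, the structure constants are graded-commutative and associative: A_{αβ}^γ = (-1)^{|α||β|} A_{βα}^γ and A_{βγ}^ρ A_{αρ}^σ = (-1)^{|α||β|} A_{αγ}^ρ A_{βρ}^σ. -/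
variable {k C : Type} [Field k] [AddCommGroup C] [Module k C]

/-- Theorem 12, first two relations: in the versal (semi-classical)
algebra `E = C ⊗ k[[H*]]` — a graded super-commutative algebra over `k` that is a
module over the coefficient ring `R = k[[H*]]` — with versal differential `Qv = 𝒬`
(square-zero, `R`-linear, a graded derivation of the product), let `Oa α`
(of ghost number `g α`) be `𝒬`-closed representatives of a basis of the
`𝒬`-cohomology (so any `R`-linear combination of them that is `𝒬`-exact has zero
coefficients), satisfying `O_α·O_β = A_{αβ}^γ • O_γ + 𝒬 L_{αβ}`.  Then the
structure constants are graded-commutative and associative: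
`A_{αβ}^γ = (-1)^{|α||β|} A_{βα}^γ` and
`A_{βγ}^ρ A_{αρ}^σ = (-1)^{|α||β|} A_{αγ}^ρ A_{βρ}^σ`. -/
theorem structure_constants_comm_assoc [CharZero k]
    {R A : Type} [CommRing R] [Algebra k R] [Module R C] [IsScalarTower k R C]
    [Fintype A]
    (𝒜 : GCA k C) (Qv : C →+ C)
    (hQvR : ∀ (r : R) (x : C), Qv (r • x) = r • Qv x)
    (hQv2 : ∀ x : C, Qv (Qv x) = 0)
    (hRmul₁ : ∀ (r : R) (x y : C), 𝒜.mul (r • x) y = r • 𝒜.mul x y)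
    (hRmul₂ : ∀ (r : R) (x y : C), 𝒜.mul x (r • y) = r • 𝒜.mul x y)
    (hRgrade : ∀ (r : R) (m : ℤ) (x : C), x ∈ 𝒜.grade m → r • x ∈ 𝒜.grade m)
    (hQvderiv : ∀ (m : ℤ) (x y : C), x ∈ 𝒜.grade m →
      Qv (𝒜.mul x y) = 𝒜.mul (Qv x) y + (m.negOnePow : ℤ) • 𝒜.mul x (Qv y))
    (g : A → ℤ) (Oa : A → C) (L : A → A → C) (Aco : A → A → A → R)
    (hOmem : ∀ a, Oa a ∈ 𝒜.grade (g a))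
    (hQvOa : ∀ a, Qv (Oa a) = 0)
    (hindep : ∀ (c : A → R) (y : C), (∑ a : A, c a • Oa a) = Qv y → ∀ a, c a = 0)
    (hrel : ∀ a b : A,
      𝒜.mul (Oa a) (Oa b) = (∑ r : A, Aco a b r • Oa r) + Qv (L a b)) :
    (∀ a b r : A, Aco a b r = ((g a * g b).negOnePow : ℤ) • Aco b a r) ∧
    (∀ a b c s : A,
      (∑ r : A, Aco b c r * Aco a r s)
        = ((g a * g b).negOnePow : ℤ) • ∑ r : A, Aco a c r * Aco b r s) := by
  classical
  have husq : ∀ (m : ℤ) (z : C), (m.negOnePow : ℤ) • ((m.negOnePow : ℤ) • z) = z := by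
    intro m z
    rw [smul_smul, ← Units.val_mul, Int.units_mul_self, Units.val_one, one_smul]
  -- exactness of Ox * Qv y
  have hexact : ∀ (x : A) (y : C),
      𝒜.mul (Oa x) (Qv y) = Qv (((g x).negOnePow : ℤ) • 𝒜.mul (Oa x) y) := by
    intro x y
    have h := hQvderiv (g x) (Oa x) y (hOmem x)
    rw [hQvOa x] at h
    have h0 : 𝒜.mul (0 : C) y = 0 := by
      rw [map_zero]; rfl
    rw [h0, zero_add] at h
    rw [map_zsmul, h, husq]
  have hsc : ∀ a b : A,
      𝒜.mul (Oa a) (Oa b) = ((g a * g b).negOnePow : ℤ) • 𝒜.mul (Oa b) (Oa a) :=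
    fun a b => 𝒜.supercomm (hOmem a) (hOmem b)
  constructor
  · intro a b r
    set u : ℤ := ((g a * g b).negOnePow : ℤ) with hu
    have h1 : (∑ s : A, (Aco a b s - u • Aco b a s) • Oa s)
        = Qv (u • L b a - L a b) := by
      have h2 := hsc a b
      rw [hrel a b, hrel b a, smul_add, Finset.smul_sum] at h2
      have hsw : ∀ s : A, u • (Aco b a s • Oa s) = (u • Aco b a s) • Oa s := by
        intro s; rw [smul_assoc]
      simp only [← hu, hsw] at h2
      have hsum : (∑ s : A, (Aco a b s - u • Aco b a s) • Oa s)
          = (∑ s : A, Aco a b s • Oa s) - ∑ s : A, (u • Aco b a s) • Oa s := by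
        rw [← Finset.sum_sub_distrib]
        exact Finset.sum_congr rfl fun s _ => by rw [sub_smul]
      rw [map_sub, map_zsmul, hsum, sub_eq_sub_iff_add_eq_add, h2]
      abel
    have := hindep (fun s => Aco a b s - u • Aco b a s) _ h1 r
    have := sub_eq_zero.mp this
    exact this
  · intro a b c s
    set u : ℤ := ((g a * g b).negOnePow : ℤ) with hu
    have key : ∀ x y z : A, ∃ E : C,
        𝒜.mul (Oa x) (𝒜.mul (Oa y) (Oa z))
          = (∑ s : A, (∑ r : A, Aco y z r * Aco x r s) • Oa s) + Qv E := by
      intro x y z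
      refine ⟨(∑ r : A, Aco y z r • L x r)
        + ((g x).negOnePow : ℤ) • 𝒜.mul (Oa x) (L y z), ?_⟩
      rw [hrel y z, map_add, map_sum]
      have step1 : ∀ r : A, (𝒜.mul (Oa x)) (Aco y z r • Oa r)
          = (∑ t : A, (Aco y z r * Aco x r t) • Oa t) + Qv (Aco y z r • L x r) := by
        intro r
        rw [hRmul₂, hrel x r, smul_add, Finset.smul_sum, hQvR]
        congr 1
        exact Finset.sum_congr rfl fun t _ => by rw [smul_smul]
      simp only [step1]
      rw [hexact x (L y z), Finset.sum_add_distrib, ← map_sum, add_assoc, ← map_add]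
      congr 1
      rw [Finset.sum_comm]
      exact Finset.sum_congr rfl fun t _ => (Finset.sum_smul).symm
    obtain ⟨E1, h1⟩ := key a b c
    obtain ⟨E2, h2⟩ := key b a c
    have hA : 𝒜.mul (Oa a) (𝒜.mul (Oa b) (Oa c))
        = u • 𝒜.mul (Oa b) (𝒜.mul (Oa a) (Oa c)) := by
      rw [← 𝒜.mul_assoc, ← 𝒜.mul_assoc, hsc a b, map_zsmul, LinearMap.smul_apply]
    rw [h1, h2, smul_add, Finset.smul_sum] at hA
    have hsw : ∀ t : A, u • ((∑ r : A, Aco a c r * Aco b r t) • Oa t)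
        = (u • (∑ r : A, Aco a c r * Aco b r t)) • Oa t := by
      intro t; rw [smul_assoc]
    simp only [hsw] at hA
    have h3 : (∑ t : A, ((∑ r : A, Aco b c r * Aco a r t)
          - u • (∑ r : A, Aco a c r * Aco b r t)) • Oa t)
        = Qv (u • E2 - E1) := by
      have hsum : (∑ t : A, ((∑ r : A, Aco b c r * Aco a r t)
            - u • (∑ r : A, Aco a c r * Aco b r t)) • Oa t)
          = (∑ t : A, (∑ r : A, Aco b c r * Aco a r t) • Oa t)
            - ∑ t : A, (u • (∑ r : A, Aco a c r * Aco b r t)) • Oa t := by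
        rw [← Finset.sum_sub_distrib]
        exact Finset.sum_congr rfl fun t _ => by rw [sub_smul]
      rw [hsum, map_sub, map_zsmul, sub_eq_sub_iff_add_eq_add, hA]
      abel
    have := hindep (fun t => (∑ r : A, Aco b c r * Aco a r t)
      - u • (∑ r : A, Aco a c r * Aco b r t)) _ h3 s
    exact sub_eq_zero.mp this
end

section
/- Given a special versal solution O in a semi-classical dBV algebra, with O_α·O_β = A_{αβ}^γ O_γ + 𝒬L_{αβ} and O_{αβ} = ΔL_{αβ}, the potentiality (flatness) relation holds: ∂_α A_{βγ}^ρ = (-1)^{|α||β|} ∂_β A_{αγ}^ρ. Consequently (A)_β^γ := dtᵅ A_{αβ}^γ is the connection 1-form of a linear pencil of torsion-free flat connections. -/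
variable {k C : Type} [Field k] [AddCommGroup C] [Module k C]

lemma sg_mul_sg (m n : ℤ) : ((m.negOnePow : ℤ)) * ((n.negOnePow : ℤ)) = (((m+n).negOnePow : ℤ)) := by
  rw [Int.negOnePow_add]; push_cast; ring

lemma sgsmul {M : Type} [AddCommGroup M] (m n : ℤ) (x : M) :
    (m.negOnePow : ℤ) • (n.negOnePow : ℤ) • x = ((m+n).negOnePow : ℤ) • x := by
  rw [smul_smul, sg_mul_sg]

lemma sgsq {M : Type} [AddCommGroup M] (n : ℤ) (x : M) :
    (n.negOnePow : ℤ) • (n.negOnePow : ℤ) • x = x := by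
  rw [sgsmul, Int.negOnePow_even _ ⟨n, rfl⟩]; simp

lemma sg_congr {M : Type} [AddCommGroup M] {m n : ℤ} (h : Even (m - n)) (x : M) :
    (m.negOnePow : ℤ) • x = (n.negOnePow : ℤ) • x := by
  rw [(Int.negOnePow_eq_iff m n).mpr h]

/-- The twisted differential 𝒬 = Q + (O,·) as an additive homomorphism. -/
def QcHom (B : DBV k C) (O : C) : C →+ C :=
  AddMonoidHom.mk' (fun y => B.Q y + bvBracket B.toGCA B.Dd 0 O y) (by
    intro x y
    simp [bvBracket, map_add, smul_add]
    abel)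

lemma QcHom_apply (B : DBV k C) (O y : C) :
    QcHom B O y = B.Q y + bvBracket B.toGCA B.Dd 0 O y := rfl

/-- Bracket with a Δ-closed first argument. -/
lemma br_exp (B : DBV k C) {x : C} (hx : B.Dd x = 0) (m : ℤ) (y : C) :
    bvBracket B.toGCA B.Dd m x y
      = (m.negOnePow : ℤ) • B.Dd (B.mul x y) - B.mul x (B.Dd y) := by
  rw [bvBracket, hx]
  rw [smul_sub, smul_sub, sgsq]
  simp

lemma brO_eq (B : DBV k C) {O : C} (hDO : B.Dd O = 0) (y : C) :
    bvBracket B.toGCA B.Dd 0 O y = B.Dd (B.mul O y) - B.mul O (B.Dd y) := by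
  simpa using br_exp B hDO 0 y

lemma Qc_smulR {R : Type} [CommRing R] [Module R C] (B : DBV k C) {O : C} (hDO : B.Dd O = 0)
    (hQR : ∀ (r : R) (x : C), B.Q (r • x) = r • B.Q x)
    (hDR : ∀ (r : R) (x : C), B.Dd (r • x) = r • B.Dd x)
    (hRmul₂ : ∀ (r : R) (x y : C), B.mul x (r • y) = r • B.mul x y)
    (r : R) (y : C) : QcHom B O (r • y) = r • QcHom B O y := by
  rw [QcHom_apply, QcHom_apply, brO_eq B hDO, brO_eq B hDO, hQR, hRmul₂, hDR, hDR, hRmul₂,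
    smul_add, smul_sub]

lemma Qc_deriv (B : DBV k C) {O : C} (hO : O ∈ B.grade 0) {m : ℤ} {x : C} (hx : x ∈ B.grade m)
    (y : C) :
    QcHom B O (B.mul x y)
      = B.mul (QcHom B O x) y + (m.negOnePow : ℤ) • B.mul x (QcHom B O y) := by
  rw [QcHom_apply, QcHom_apply, QcHom_apply, B.Q_deriv hx, B.poisson hO hx]
  simp only [zero_add, one_mul, map_add, LinearMap.add_apply, smul_add]
  abel

lemma D_Qc (B : DBV k C) {O : C} (hDO : B.Dd O = 0) (y : C) :
    B.Dd (QcHom B O y) = - QcHom B O (B.Dd y) := by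
  have h : B.Dd (B.Q y) = -B.Q (B.Dd y) := eq_neg_of_add_eq_zero_right (B.QDd y)
  rw [QcHom_apply, QcHom_apply, brO_eq B hDO, brO_eq B hDO]
  rw [map_add, map_sub, B.Dd_sq, B.Dd_sq, h]
  simp only [map_zero]
  abel

lemma exact_mul (B : DBV k C) {O : C} (hO : O ∈ B.grade 0) {m : ℤ} {x : C}
    (hx : x ∈ B.grade m) (hQcx : QcHom B O x = 0) (z : C) :
    B.mul x (QcHom B O z) = (m.negOnePow : ℤ) • QcHom B O (B.mul x z) := by
  have h := Qc_deriv B hO hx z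
  rw [hQcx] at h
  simp only [map_zero, LinearMap.zero_apply, zero_add] at h
  rw [h, sgsq]

/-- Theorem 12, potentiality: let `O` be a special versal solution
in a semi-classical dBV algebra (the dBV algebra `B` stands for `C ⊗ k[[H*]]`,
an `R = k[[H*]]`-module), with partials `O_α = ∂O/∂tᵅ ∈ Ker Δ`,
`∂_α O_β = Δ L_{αβ}`, and
`O_α·O_β = A_{αβ}^γ • O_γ + Q L_{αβ} + (O, L_{αβ})`, where the classes `[O_σ]`
form a basis of the cohomology of `𝒬 = Q + (O,·)`.  Then the structure constants
satisfy the potentiality (flatness) relation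
`∂_α A_{βγ}^ρ = (-1)^{|α||β|} ∂_β A_{αγ}^ρ`; equivalently
`(A)_β^γ = dtᵅ A_{αβ}^γ` is the connection 1-form of a linear pencil of
torsion-free flat connections. -/
theorem structure_constants_potentiality [CharZero k]
    {R A : Type} [CommRing R] [Algebra k R] [Module R C] [IsScalarTower k R C]
    [Fintype A]
    (B : DBV k C)
    (hQR : ∀ (r : R) (x : C), B.Q (r • x) = r • B.Q x)
    (hDR : ∀ (r : R) (x : C), B.Dd (r • x) = r • B.Dd x)
    (hRmul₁ : ∀ (r : R) (x y : C), B.mul (r • x) y = r • B.mul x y)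
    (hRmul₂ : ∀ (r : R) (x y : C), B.mul x (r • y) = r • B.mul x y)
    (hRgrade : ∀ (r : R) (m : ℤ) (x : C), x ∈ B.grade m → r • x ∈ B.grade m)
    (g : A → ℤ) (pd : A → C →+ C) (pdR : A → R →+ R)
    (hpdR_deriv : ∀ (a : A) (r s : R), pdR a (r * s) = pdR a r * s + r * pdR a s)
    (hpd_smul : ∀ (a : A) (r : R) (x : C), pd a (r • x) = pdR a r • x + r • pd a x)
    (hpdQ : ∀ (a : A) (x : C), pd a (B.Q x) = ((g a).negOnePow : ℤ) • B.Q (pd a x))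
    (hpdD : ∀ (a : A) (x : C), pd a (B.Dd x) = ((g a).negOnePow : ℤ) • B.Dd (pd a x))
    (hpd_mem : ∀ (a : A) (m : ℤ) (x : C), x ∈ B.grade m → pd a x ∈ B.grade (m + g a))
    (hpd_mul : ∀ (a : A) (m : ℤ) (x y : C), x ∈ B.grade m →
      pd a (B.mul x y)
        = B.mul (pd a x) y + ((g a * m).negOnePow : ℤ) • B.mul x (pd a y))
    (hpd_br : ∀ (a : A) (m : ℤ) (x y : C), x ∈ B.grade m →
      pd a (bvBracket B.toGCA B.Dd m x y)
        = bvBracket B.toGCA B.Dd (m + g a) (pd a x) y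
          + ((g a * (m + 1)).negOnePow : ℤ) • bvBracket B.toGCA B.Dd m x (pd a y))
    (O : C) (L : A → A → C) (Aco : A → A → A → R)
    (hO : O ∈ B.grade 0)
    (hmc : B.Q O + (2 : k)⁻¹ • bvBracket B.toGCA B.Dd 0 O O = 0)
    (hDO : B.Dd O = 0)
    (hDOa : ∀ a : A, B.Dd (pd a O) = 0)
    (hOab : ∀ a b : A, pd a (pd b O) = B.Dd (L a b))
    (hrel : ∀ a b : A,
      B.mul (pd a O) (pd b O)
        = (∑ r : A, Aco a b r • pd r O) + B.Q (L a b)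
          + bvBracket B.toGCA B.Dd 0 O (L a b))
    (hindep : ∀ (c : A → R) (y : C),
      (∑ a : A, c a • pd a O) = B.Q y + bvBracket B.toGCA B.Dd 0 O y → ∀ a, c a = 0)
    (hspan : ∀ x : C, B.Q x + bvBracket B.toGCA B.Dd 0 O x = 0 →
      ∃ (c : A → R) (y : C),
        x = (∑ a : A, c a • pd a O) + (B.Q y + bvBracket B.toGCA B.Dd 0 O y)) :
    ∀ a b c r : A,
      pdR a (Aco b c r) = ((g a * g b).negOnePow : ℤ) • pdR b (Aco a c r) := by
  intro a b c r
  have hOmem : ∀ x : A, pd x O ∈ B.grade (g x) := fun x => by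
    simpa using hpd_mem x 0 O hO
  have hQcS : ∀ (t : R) (y : C), QcHom B O (t • y) = t • QcHom B O y :=
    Qc_smulR B hDO hQR hDR hRmul₂
  have hQc_rel : ∀ x y : A, QcHom B O (L x y)
      = B.mul (pd x O) (pd y O) - ∑ s : A, Aco x y s • pd s O := by
    intro x y
    rw [QcHom_apply, hrel x y]
    abel
  have k2 : ∀ v : C, (2:ℕ) • v = 0 → v = 0 := by
    intro v h
    have h' : ((2:ℕ):k) • v = 0 := by rw [Nat.cast_smul_eq_nsmul]; exact h
    simpa [smul_eq_zero, (by norm_num : ((2:ℕ):k) ≠ 0)] using h'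
  -- 𝒬 O_x = 0
  have hQcOa : ∀ x : A, QcHom B O (pd x O) = 0 := by
    intro x
    have h2 : bvBracket B.toGCA B.Dd 0 O O = -((2:ℕ) • B.Q O) := by
      have h1 : (2:k) • ((2:k)⁻¹ • bvBracket B.toGCA B.Dd 0 O O) = (2:k) • (-(B.Q O)) := by
        rw [eq_neg_of_add_eq_zero_right hmc]
      rw [smul_smul, mul_inv_cancel₀ (by norm_num : (2:k) ≠ 0), one_smul, smul_neg] at h1
      rw [h1]
      congr 1
      rw [← Nat.cast_smul_eq_nsmul k 2 (B.Q O)]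
      norm_num
    have h3 := congrArg (pd x) h2
    rw [hpd_br x 0 O O hO] at h3
    simp only [zero_add, mul_one] at h3
    rw [br_exp B (hDOa x) (g x) O, hDO, (B.mul (pd x O)).map_zero, sub_zero] at h3
    rw [B.supercomm (hOmem x) hO] at h3
    simp only [mul_zero, Int.negOnePow_zero, Units.val_one, one_smul] at h3
    rw [brO_eq B hDO (pd x O), hDOa x, (B.mul O).map_zero, sub_zero] at h3
    rw [map_neg, map_nsmul, hpdQ] at h3
    have hq : QcHom B O (pd x O) = B.Q (pd x O) + B.Dd (B.mul O (pd x O)) := by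
      rw [QcHom_apply, brO_eq B hDO, hDOa x, (B.mul O).map_zero, sub_zero]
    have key : (2:ℕ) • (((g x).negOnePow : ℤ) • QcHom B O (pd x O)) = 0 := by
      rw [hq]
      calc (2:ℕ) • (((g x).negOnePow : ℤ) • (B.Q (pd x O) + B.Dd (B.mul O (pd x O))))
          = (((g x).negOnePow : ℤ) • B.Dd (B.mul O (pd x O))
              + ((g x).negOnePow : ℤ) • B.Dd (B.mul O (pd x O)))
            + (2:ℕ) • (((g x).negOnePow : ℤ) • B.Q (pd x O)) := by
            rw [smul_add]; abel
        _ = -((2:ℕ) • (((g x).negOnePow : ℤ) • B.Q (pd x O)))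
            + (2:ℕ) • (((g x).negOnePow : ℤ) • B.Q (pd x O)) := by rw [h3]
        _ = 0 := by abel
    have h4 := k2 _ key
    have h5 := congrArg (fun z => ((g x).negOnePow : ℤ) • z) h4
    simp only [smul_zero] at h5
    rw [sgsq] at h5
    exact h5
  set ε : ℤ := ((g a * g b).negOnePow : ℤ) with hε
  have hsc : B.mul (pd a O) (pd b O) = ε • B.mul (pd b O) (pd a O) :=
    B.supercomm (hOmem a) (hOmem b)
  have hsum_sub : ∀ (f h : A → R), ∑ s : A, (f s - ε • h s) • pd s O
      = (∑ s : A, f s • pd s O) - ε • ∑ s : A, h s • pd s O := by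
    intro f h
    rw [Finset.smul_sum, ← Finset.sum_sub_distrib]
    exact Finset.sum_congr rfl fun s _ => by rw [sub_smul, smul_assoc]
  have key1 : (∑ s : A, (Aco a b s - ε • Aco b a s) • pd s O)
      = QcHom B O (ε • L b a - L a b) := by
    rw [hsum_sub, map_sub, map_zsmul, hQc_rel, hQc_rel, hsc, smul_sub]
    module
  have hAsym : ∀ s : A, Aco a b s - ε • Aco b a s = 0 := by
    refine hindep _ (ε • L b a - L a b) ?_
    rw [key1, QcHom_apply]
  have hQu : QcHom B O (L a b - ε • L b a) = 0 := by
    have h0 : QcHom B O (ε • L b a - L a b) = 0 := by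
      rw [← key1]
      exact Finset.sum_eq_zero fun s _ => by rw [hAsym s, zero_smul]
    have hneg : L a b - ε • L b a = -(ε • L b a - L a b) := by module
    rw [hneg, map_neg, h0, neg_zero]
  obtain ⟨d₀, y₀, hu⟩ := hspan (L a b - ε • L b a) (by
    have h := hQu; rwa [QcHom_apply] at h)
  have hDu : B.Dd (L a b - ε • L b a) = QcHom B O (-(B.Dd y₀)) := by
    rw [hu, map_add, map_sum]
    rw [Finset.sum_congr rfl (fun s _ => by rw [hDR, hDOa, smul_zero] :
      ∀ s ∈ Finset.univ, B.Dd (d₀ s • pd s O) = (0:C)), Finset.sum_const_zero, zero_add]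
    rw [show B.Q y₀ + bvBracket B.toGCA B.Dd 0 O y₀ = QcHom B O y₀ from (QcHom_apply B O y₀).symm]
    rw [D_Qc B hDO, map_neg]
  have hmul_sum : ∀ (x : C) (f : A → C), B.mul x (∑ s : A, f s) = ∑ s : A, B.mul x (f s) :=
    fun x f => map_sum (B.mul x) f Finset.univ
  have hOOO : ∀ x y : A,
      B.mul (pd x O) (B.mul (pd y O) (pd c O))
        = (∑ t : A, (∑ s : A, Aco y c s * Aco x s t) • pd t O)
          + QcHom B O ((∑ s : A, Aco y c s • L x s)
              + ((g x).negOnePow : ℤ) • B.mul (pd x O) (L y c)) := by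
    intro x y
    have h1 : B.mul (pd y O) (pd c O) = (∑ s : A, Aco y c s • pd s O) + QcHom B O (L y c) := by
      rw [hQc_rel]; abel
    rw [h1, map_add (B.mul (pd x O)), hmul_sum]
    have h2 : ∀ s ∈ Finset.univ, B.mul (pd x O) (Aco y c s • pd s O)
        = (∑ t : A, (Aco y c s * Aco x s t) • pd t O) + QcHom B O (Aco y c s • L x s) := by
      intro s _
      rw [hRmul₂, hQcS]
      have h21 : B.mul (pd x O) (pd s O) = (∑ t : A, Aco x s t • pd t O) + QcHom B O (L x s) := by
        rw [hQc_rel]; abel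
      rw [h21, smul_add, Finset.smul_sum]
      congr 1
      exact Finset.sum_congr rfl fun t _ => by rw [smul_smul]
    rw [Finset.sum_congr rfl h2, Finset.sum_add_distrib]
    rw [← map_sum (QcHom B O) (fun s => Aco y c s • L x s) Finset.univ]
    rw [exact_mul B hO (hOmem x) (hQcOa x) (L y c)]
    rw [Finset.sum_comm]
    have h4 : ∀ t ∈ Finset.univ, (∑ s : A, Aco y c s * Aco x s t) • pd t O
        = ∑ s : A, (Aco y c s * Aco x s t) • pd t O := fun t _ => Finset.sum_smul
    rw [Finset.sum_congr rfl h4, map_add (QcHom B O), map_zsmul]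
    abel
  have hassoc : B.mul (pd a O) (B.mul (pd b O) (pd c O))
      = ε • B.mul (pd b O) (B.mul (pd a O) (pd c O)) := by
    rw [← B.mul_assoc, ← B.mul_assoc, hsc]
    simp [map_zsmul, LinearMap.smul_apply]
  have hWsum : (∑ t : A, ((∑ s : A, Aco b c s * Aco a s t)
        - ε • ∑ s : A, Aco a c s * Aco b s t) • pd t O)
      = QcHom B O (ε • ((∑ s : A, Aco a c s • L b s)
            + ((g b).negOnePow : ℤ) • B.mul (pd b O) (L a c))
          - ((∑ s : A, Aco b c s • L a s)
            + ((g a).negOnePow : ℤ) • B.mul (pd a O) (L b c))) := by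
    rw [hsum_sub]
    have sab : (∑ t : A, (∑ s : A, Aco b c s * Aco a s t) • pd t O)
        = B.mul (pd a O) (B.mul (pd b O) (pd c O))
          - QcHom B O ((∑ s : A, Aco b c s • L a s)
              + ((g a).negOnePow : ℤ) • B.mul (pd a O) (L b c)) := by
      rw [hOOO a b]; abel
    have sba : (∑ t : A, (∑ s : A, Aco a c s * Aco b s t) • pd t O)
        = B.mul (pd b O) (B.mul (pd a O) (pd c O))
          - QcHom B O ((∑ s : A, Aco a c s • L b s)
              + ((g b).negOnePow : ℤ) • B.mul (pd b O) (L a c)) := by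
      rw [hOOO b a]; abel
    rw [sab, sba, hassoc, map_sub, map_zsmul]
    module
  have hWDVV : ∀ t : A, (∑ s : A, Aco b c s * Aco a s t)
      - ε • ∑ s : A, Aco a c s * Aco b s t = 0 := by
    refine hindep _ (ε • ((∑ s : A, Aco a c s • L b s)
            + ((g b).negOnePow : ℤ) • B.mul (pd b O) (L a c))
          - ((∑ s : A, Aco b c s • L a s)
            + ((g a).negOnePow : ℤ) • B.mul (pd a O) (L b c))) ?_
    rw [hWsum, QcHom_apply]
  have hsum2 : ∀ x y : A, B.mul (pd x O) (∑ s : A, Aco y c s • pd s O)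
      = ∑ s : A, Aco y c s • B.mul (pd x O) (pd s O) := by
    intro x y
    rw [hmul_sum]
    exact Finset.sum_congr rfl fun s _ => hRmul₂ _ _ _
  have hsum1 : ∀ x y : A, QcHom B O (∑ s : A, Aco y c s • L x s)
      = (∑ s : A, Aco y c s • B.mul (pd x O) (pd s O))
        - ∑ t : A, (∑ s : A, Aco y c s * Aco x s t) • pd t O := by
    intro x y
    rw [map_sum]
    have h1 : ∀ s ∈ Finset.univ, QcHom B O (Aco y c s • L x s)
        = Aco y c s • B.mul (pd x O) (pd s O)
          - ∑ t : A, (Aco y c s * Aco x s t) • pd t O := by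
      intro s _
      rw [hQcS, hQc_rel, smul_sub, Finset.smul_sum]
      congr 1
      exact Finset.sum_congr rfl fun t _ => by rw [smul_smul]
    rw [Finset.sum_congr rfl h1, Finset.sum_sub_distrib, Finset.sum_comm]
    congr 1
    exact Finset.sum_congr rfl fun t _ => Finset.sum_smul.symm
  have hU : (∑ t : A, (∑ s : A, Aco b c s * Aco a s t) • pd t O)
      - ε • ∑ t : A, (∑ s : A, Aco a c s * Aco b s t) • pd t O = 0 := by
    rw [← hsum_sub]
    exact Finset.sum_eq_zero fun t _ => by rw [hWDVV t, zero_smul]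
  have hQcW : QcHom B O (ε • (((g b).negOnePow : ℤ) • B.mul (pd b O) (L a c))
      - ((g a).negOnePow : ℤ) • B.mul (pd a O) (L b c)
      - (∑ s : A, Aco b c s • L a s) + ε • ∑ s : A, Aco a c s • L b s) = 0 := by
    rw [map_add, map_sub, map_sub, map_zsmul, map_zsmul, map_zsmul, map_zsmul]
    have e1 : QcHom B O (B.mul (pd b O) (L a c))
        = ((g b).negOnePow : ℤ) • B.mul (pd b O) (QcHom B O (L a c)) := by
      rw [Qc_deriv B hO (hOmem b), hQcOa b]
      simp only [map_zero, LinearMap.zero_apply, zero_add]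
    have e2 : QcHom B O (B.mul (pd a O) (L b c))
        = ((g a).negOnePow : ℤ) • B.mul (pd a O) (QcHom B O (L b c)) := by
      rw [Qc_deriv B hO (hOmem a), hQcOa a]
      simp only [map_zero, LinearMap.zero_apply, zero_add]
    rw [e1, e2, sgsq, sgsq]
    rw [hQc_rel a c, hQc_rel b c]
    rw [map_sub (B.mul (pd b O)), map_sub (B.mul (pd a O))]
    rw [hsum2 b a, hsum2 a b, hsum1 a b, hsum1 b a, hassoc]
    linear_combination (norm := module) hU
  obtain ⟨d₁, y₁, hW⟩ := hspan (ε • (((g b).negOnePow : ℤ) • B.mul (pd b O) (L a c))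
      - ((g a).negOnePow : ℤ) • B.mul (pd a O) (L b c)
      - (∑ s : A, Aco b c s • L a s) + ε • ∑ s : A, Aco a c s • L b s) (by
    have h := hQcW; rwa [QcHom_apply] at h)
  have hDW : B.Dd (ε • (((g b).negOnePow : ℤ) • B.mul (pd b O) (L a c))
      - ((g a).negOnePow : ℤ) • B.mul (pd a O) (L b c)
      - (∑ s : A, Aco b c s • L a s) + ε • ∑ s : A, Aco a c s • L b s)
      = QcHom B O (-(B.Dd y₁)) := by
    rw [hW, map_add, map_sum]
    rw [Finset.sum_congr rfl (fun s _ => by rw [hDR, hDOa, smul_zero] :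
      ∀ s ∈ Finset.univ, B.Dd (d₁ s • pd s O) = (0:C)), Finset.sum_const_zero, zero_add]
    rw [show B.Q y₁ + bvBracket B.toGCA B.Dd 0 O y₁ = QcHom B O y₁ from (QcHom_apply B O y₁).symm]
    rw [D_Qc B hDO, map_neg]
  -- differentiating the defining relation
  have hLHS : ∀ x y : A, pd x (B.mul (pd y O) (pd c O))
      = B.mul (B.Dd (L x y)) (pd c O)
        + ((g x * g y).negOnePow : ℤ) • B.mul (pd y O) (B.Dd (L x c)) := by
    intro x y
    rw [hpd_mul x (g y) (pd y O) (pd c O) (hOmem y), hOab, hOab]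
  have hRHS : ∀ x y : A,
      pd x ((∑ s : A, Aco y c s • pd s O) + B.Q (L y c) + bvBracket B.toGCA B.Dd 0 O (L y c))
        = (∑ s : A, pdR x (Aco y c s) • pd s O) + (∑ s : A, Aco y c s • B.Dd (L x s))
          + (((g x).negOnePow : ℤ) • B.Dd (B.mul (pd x O) (L y c))
              - B.mul (pd x O) (B.Dd (L y c)))
          + ((g x).negOnePow : ℤ) • QcHom B O (pd x (L y c)) := by
    intro x y
    rw [map_add, map_add, map_sum (pd x)]
    rw [Finset.sum_congr rfl (fun s _ => by rw [hpd_smul, hOab] :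
      ∀ s ∈ Finset.univ, pd x (Aco y c s • pd s O)
        = pdR x (Aco y c s) • pd s O + Aco y c s • B.Dd (L x s)), Finset.sum_add_distrib]
    rw [hpdQ, hpd_br x 0 O (L y c) hO]
    simp only [zero_add, mul_one]
    rw [br_exp B (hDOa x) (g x) (L y c), QcHom_apply, smul_add]
    module
  have hEq : ∀ x y : A,
      B.mul (B.Dd (L x y)) (pd c O)
        + ((g x * g y).negOnePow : ℤ) • B.mul (pd y O) (B.Dd (L x c))
      = (∑ s : A, pdR x (Aco y c s) • pd s O) + (∑ s : A, Aco y c s • B.Dd (L x s))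
          + (((g x).negOnePow : ℤ) • B.Dd (B.mul (pd x O) (L y c))
              - B.mul (pd x O) (B.Dd (L y c)))
          + ((g x).negOnePow : ℤ) • QcHom B O (pd x (L y c)) := by
    intro x y
    rw [← hLHS x y, ← hRHS x y]
    exact congrArg (pd x) (hrel y c)
  have Ea := hEq a b
  have Eb := hEq b a
  rw [← hε] at Ea
  rw [show ((g b * g a).negOnePow : ℤ) = ε from by rw [hε, mul_comm]] at Eb
  -- the grade of Δu
  have hgrade_u : B.Dd (L a b - ε • L b a) ∈ B.grade (g a + g b) := by
    have e0 : B.Dd (L a b - ε • L b a) = pd a (pd b O) - ε • pd b (pd a O) := by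
      rw [map_sub, map_zsmul, hOab, hOab]
    rw [e0]
    have h1 : pd a (pd b O) ∈ B.grade (g a + g b) := by
      have := hpd_mem a (g b) (pd b O) (hOmem b); rwa [add_comm] at this
    have h2 : pd b (pd a O) ∈ B.grade (g a + g b) := hpd_mem b (g a) (pd a O) (hOmem a)
    exact Submodule.sub_mem _ h1 ((B.grade (g a + g b)).toAddSubgroup.zsmul_mem h2 ε)
  have hDuOc : B.mul (B.Dd (L a b - ε • L b a)) (pd c O)
      = (((g a + g b) * g c + g c).negOnePow : ℤ)
          • QcHom B O (B.mul (pd c O) (-(B.Dd y₀))) := by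
    rw [B.supercomm hgrade_u (hOmem c), hDu, exact_mul B hO (hOmem c) (hQcOa c), sgsmul]
  have hsplit : B.mul (B.Dd (L a b - ε • L b a)) (pd c O)
      = B.mul (B.Dd (L a b)) (pd c O) - ε • B.mul (B.Dd (L b a)) (pd c O) := by
    rw [map_sub, map_zsmul, map_sub B.mul, map_zsmul B.mul]
    simp [LinearMap.sub_apply, LinearMap.smul_apply]
  have hDWexp : B.Dd (ε • (((g b).negOnePow : ℤ) • B.mul (pd b O) (L a c))
      - ((g a).negOnePow : ℤ) • B.mul (pd a O) (L b c)
      - (∑ s : A, Aco b c s • L a s) + ε • ∑ s : A, Aco a c s • L b s)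
      = ε • (((g b).negOnePow : ℤ) • B.Dd (B.mul (pd b O) (L a c)))
        - ((g a).negOnePow : ℤ) • B.Dd (B.mul (pd a O) (L b c))
        - (∑ s : A, Aco b c s • B.Dd (L a s)) + ε • ∑ s : A, Aco a c s • B.Dd (L b s) := by
    rw [map_add, map_sub, map_sub, map_zsmul, map_zsmul, map_zsmul, map_zsmul,
      map_sum, map_sum]
    rw [Finset.sum_congr rfl (fun s _ => hDR (Aco b c s) (L a s) :
      ∀ s ∈ Finset.univ, B.Dd (Aco b c s • L a s) = Aco b c s • B.Dd (L a s))]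
    rw [Finset.sum_congr rfl (fun s _ => hDR (Aco a c s) (L b s) :
      ∀ s ∈ Finset.univ, B.Dd (Aco a c s • L b s) = Aco a c s • B.Dd (L b s))]
  have hDW2 : ε • (((g b).negOnePow : ℤ) • B.Dd (B.mul (pd b O) (L a c)))
        - ((g a).negOnePow : ℤ) • B.Dd (B.mul (pd a O) (L b c))
        - (∑ s : A, Aco b c s • B.Dd (L a s)) + ε • ∑ s : A, Aco a c s • B.Dd (L b s)
      = QcHom B O (-(B.Dd y₁)) := by
    rw [← hDWexp]
    exact hDW
  have hA4 : ε • ε • B.mul (pd a O) (B.Dd (L b c)) = B.mul (pd a O) (B.Dd (L b c)) := by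
    rw [hε]; exact sgsq _ _
  have hQYexp : QcHom B O ((((g a + g b) * g c + g c).negOnePow : ℤ)
        • B.mul (pd c O) (-(B.Dd y₀))
      + (-(B.Dd y₁))
      - (((g a).negOnePow : ℤ) • pd a (L b c) - ε • ((g b).negOnePow : ℤ) • pd b (L a c)))
      = (((g a + g b) * g c + g c).negOnePow : ℤ)
          • QcHom B O (B.mul (pd c O) (-(B.Dd y₀)))
        + QcHom B O (-(B.Dd y₁))
        - (((g a).negOnePow : ℤ) • QcHom B O (pd a (L b c))
            - ε • ((g b).negOnePow : ℤ) • QcHom B O (pd b (L a c))) := by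
    rw [map_sub, map_add, map_zsmul, map_sub, map_zsmul, map_zsmul, map_zsmul]
  have main : (∑ s : A, (pdR a (Aco b c s) - ε • pdR b (Aco a c s)) • pd s O)
      = QcHom B O ((((g a + g b) * g c + g c).negOnePow : ℤ)
          • B.mul (pd c O) (-(B.Dd y₀))
        + (-(B.Dd y₁))
        - (((g a).negOnePow : ℤ) • pd a (L b c)
            - ε • ((g b).negOnePow : ℤ) • pd b (L a c))) := by
    rw [hsum_sub, hQYexp]
    linear_combination (norm := module) (ε • Eb - Ea - hsplit + hDuOc + hDW2 - hA4)
  have hall : ∀ s : A, pdR a (Aco b c s) - ε • pdR b (Aco a c s) = 0 := by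
    refine hindep _ ((((g a + g b) * g c + g c).negOnePow : ℤ)
          • B.mul (pd c O) (-(B.Dd y₀))
        + (-(B.Dd y₁))
        - (((g a).negOnePow : ℤ) • pd a (L b c)
            - ε • ((g b).negOnePow : ℤ) • pd b (L a c))) ?_
    rw [main, QcHom_apply]
  exact sub_eq_zero.mp (hall r)
end

section
/- Let (C, Δ, Q, ·) be a semi-classical dBV algebra with a BK integral ∫, and let O be a versal solution with ΔO = 0. Then ∫ is also a BK integral for the versal dBV algebra with differential 𝒬 = Q + (O,·): in particular ∫ 𝒬a = 0 for all a, and ∫(𝒬a)·b = -(-1)^{|a|} ∫ a·(𝒬b). -/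
variable {k C : Type} [Field k] [AddCommGroup C] [Module k C]

/-- let `∫ = I` be a BK integral on a semi-classical dBV algebra
(`∫(Qa)·b = -(-1)^{|a|} ∫a·(Qb)` and `∫(Δa)·b = (-1)^{|a|} ∫a·(Δb)`), and let `O`
be a versal degree-zero solution of `QO + ½(O,O) = 0` with `ΔO = 0`.  Then `∫` is
again a BK integral for the versal differential `𝒬 = Q + (O,·)`: `∫ 𝒬a = 0` for
all `a`, and `∫(𝒬a)·b = -(-1)^{|a|} ∫a·(𝒬b)`. -/
theorem BK_integral_for_versal [CharZero k] (B : DBV k C) (I : C →ₗ[k] k)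
    (hIQ : ∀ (m : ℤ) (a b : C), a ∈ B.grade m →
      I (B.mul (B.Q a) b) = -((m.negOnePow : ℤ) • I (B.mul a (B.Q b))))
    (hID : ∀ (m : ℤ) (a b : C), a ∈ B.grade m →
      I (B.mul (B.Dd a) b) = (m.negOnePow : ℤ) • I (B.mul a (B.Dd b)))
    (hD1 : B.Dd B.one = 0)
    (O : C) (hO : O ∈ B.grade 0)
    (hmc : B.Q O + (2 : k)⁻¹ • bvBracket B.toGCA B.Dd 0 O O = 0)
    (hDO : B.Dd O = 0) :
    (∀ a : C, I (B.Q a + bvBracket B.toGCA B.Dd 0 O a) = 0) ∧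
    (∀ (m : ℤ) (a b : C), a ∈ B.grade m →
      I (B.mul (B.Q a + bvBracket B.toGCA B.Dd 0 O a) b)
        = -((m.negOnePow : ℤ) •
            I (B.mul a (B.Q b + bvBracket B.toGCA B.Dd 0 O b)))) := by

  have hQ1 : B.Q B.one = 0 := by
    have h := B.Q_deriv (m := 0) (a := B.one) (b := B.one) B.one_mem
    simpa [B.one_mul, B.mul_one] using h
  have hIQ0 : ∀ b : C, I (B.Q b) = 0 := by
    intro b
    have h := hIQ 0 B.one b B.one_mem
    simpa [hQ1, B.one_mul] using h
  have hID0 : ∀ b : C, I (B.Dd b) = 0 := by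
    intro b
    have h := hID 0 B.one b B.one_mem
    simpa [hD1, B.one_mul] using h.symm
  have hODd : ∀ b : C, I (B.mul O (B.Dd b)) = 0 := by
    intro b
    have h := hID 0 O b hO
    simpa [hDO] using h.symm
  have hbr : ∀ x : C, bvBracket B.toGCA B.Dd 0 O x
      = B.Dd (B.mul O x) - B.mul O (B.Dd x) := by
    intro x
    simp [bvBracket, hDO]
  refine ⟨?_, ?_⟩
  · intro a
    simp [hbr, map_add, map_sub, hIQ0, hID0, hODd]
  · intro m a b ha
    have hOa : B.mul O a ∈ B.grade m := by
      have := B.mul_mem hO ha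
      simpa using this
    have comm1 : B.mul O a = B.mul a O := by
      have := B.supercomm ha hO
      simpa using this.symm
    have comm2 : B.mul O (B.Dd a) = B.mul (B.Dd a) O := by
      have := B.supercomm hO (B.Dd_mem ha)
      simpa using this
    have e1 := hIQ m a b ha
    have e2 := hID m (B.mul O a) b hOa
    have e5 := hID m a (B.mul O b) ha
    have e3 : B.mul (B.mul O a) (B.Dd b) = B.mul a (B.mul O (B.Dd b)) := by
      rw [comm1, B.mul_assoc]
    have e4 : B.mul (B.mul O (B.Dd a)) b = B.mul (B.Dd a) (B.mul O b) := by
      rw [comm2, B.mul_assoc]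
    rw [hbr a, hbr b]
    simp only [map_add, map_sub, LinearMap.add_apply, LinearMap.sub_apply]
    rw [e1, e2, e3, e4, e5]
    simp only [zsmul_eq_mul, smul_eq_mul]
    ring
end
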